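/- Let h ∈ L¹(ℝ) be continuous with inverse Fourier transform ĥ(y) = ∫ h(x) e^{ixy} dx, and suppose ĥ is compactly supported in [−S, S] and Σ_{m∈ℤ} |h(mτ)| < ∞. Let H be a self-adjoint matrix with ‖H‖ bounded so that all Bohr frequencies lie in [−2‖H‖, 2‖H‖], and let 0 < τ < 2π/(2‖H‖+S). Then for every matrix A, ∫_{−∞}^{∞} h(t) e^{iHt} A e^{−iHt} dt = Σ_{m∈ℤ} τ h(mτ) e^{iHmτ} A e^{−iHmτ}. -/

import Mathlib

open Matrix MeasureTheory
open scoped Real ComplexOrder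

open Complex
open scoped FourierTransform

-- small helpers
lemma norm_exp_I_mul (x y : ℝ) : ‖Complex.exp (Complex.I * x * y)‖ = 1 := by
  rw [show (Complex.I * (x:ℂ) * (y:ℂ)) = ((x*y : ℝ) : ℂ) * Complex.I by push_cast; ring]
  exact Complex.norm_exp_ofReal_mul_I _

lemma integrable_rot (h : ℝ → ℂ) (hint : Integrable h) (y : ℝ) :
    Integrable (fun t : ℝ => h t * Complex.exp (Complex.I * t * y)) := by
  have h1 : Integrable (fun t : ℝ => Complex.exp (Complex.I * t * y) * h t) := by
    refine hint.bdd_mul (c := 1) ?_ (Filter.Eventually.of_forall fun t => le_of_eq (norm_exp_I_mul t y))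
    exact (Complex.continuous_exp.comp (by continuity)).aestronglyMeasurable
  exact h1.congr (Filter.Eventually.of_forall fun t => mul_comm _ _)

lemma exp_spectral {N : ℕ} {ι : Type} [Fintype ι] [DecidableEq ι]
    (lam : ι → ℝ) (P : ι → Matrix (Fin N) (Fin N) ℂ)
    (hPorth : ∀ i j, P i * P j = if i = j then P i else 0)
    (hPsum : ∑ i, P i = 1) (z : ℂ) :
    NormedSpace.exp (z • ∑ a, (lam a : ℂ) • P a)
      = ∑ a, Complex.exp (z * (lam a : ℂ)) • P a := by
  set M := z • ∑ a, (lam a : ℂ) • P a with hMdef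
  have hM : M = ∑ a, (z * (lam a : ℂ)) • P a := by
    rw [hMdef, Finset.smul_sum]
    exact Finset.sum_congr rfl fun a _ => smul_smul z _ (P a)
  have hpow : ∀ k : ℕ, M ^ k = ∑ a, ((z * (lam a : ℂ)) ^ k) • P a := by
    intro k; induction k with
    | zero => simp [hPsum]
    | succ k ih =>
      rw [pow_succ, ih, hM, Finset.sum_mul_sum]
      refine Finset.sum_congr rfl fun a _ => ?_
      have : ∀ b, ((z * (lam a : ℂ)) ^ k • P a) * ((z * (lam b : ℂ)) • P b)
          = ((z * lam a) ^ k * (z * lam b)) • (if a = b then P a else 0) := by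
        intro b; rw [smul_mul_smul_comm, hPorth]
      simp only [this, smul_ite, smul_zero, Finset.sum_ite_eq, Finset.mem_univ, if_true]
      rw [pow_succ]
  rw [NormedSpace.exp_eq_tsum (𝕂 := ℂ)]
  have hsummand : ∀ a : ι, Summable fun k : ℕ => ((((Nat.factorial k : ℕ) : ℂ)⁻¹ * (z * lam a) ^ k)) • P a := by
    intro a
    have : Summable fun k : ℕ => (((Nat.factorial k : ℕ) : ℂ)⁻¹ * (z * lam a) ^ k) := by
      simpa [smul_eq_mul] using NormedSpace.expSeries_summable' (𝕂 := ℂ) (z * (lam a : ℂ))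
    exact this.smul_const _
  calc (∑' k : ℕ, (((Nat.factorial k : ℕ) : ℂ)⁻¹) • M ^ k)
      = ∑' k : ℕ, ∑ a, (((Nat.factorial k : ℕ) : ℂ)⁻¹ * (z * lam a) ^ k) • P a := by
        simp_rw [hpow, Finset.smul_sum, smul_smul]
    _ = ∑ a, ∑' k : ℕ, (((Nat.factorial k : ℕ) : ℂ)⁻¹ * (z * lam a) ^ k) • P a :=
        Summable.tsum_finsetSum (fun a _ => hsummand a)
    _ = ∑ a, Complex.exp (z * (lam a : ℂ)) • P a := by
        refine Finset.sum_congr rfl fun a _ => ?_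
        rw [Summable.tsum_smul_const]
        · congr 1
          rw [Complex.exp_eq_exp_ℂ, NormedSpace.exp_eq_tsum (𝕂 := ℂ)]
          simp [smul_eq_mul]
        · simpa [smul_eq_mul] using NormedSpace.expSeries_summable' (𝕂 := ℂ) (z * (lam a : ℂ))
set_option maxHeartbeats 2000000 in

lemma poisson_key (h : ℝ → ℂ) (hcont : Continuous h) (hint : Integrable h)
    (hhat : ℝ → ℂ)
    (hhat_def : ∀ y : ℝ, hhat y = ∫ x : ℝ, h x * Complex.exp (Complex.I * x * y))
    (S : ℝ) (hS : 0 < S)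
    (hsupp : ∀ y : ℝ, S < |y| → hhat y = 0)
    (τ : ℝ) (hτ0 : 0 < τ)
    (nH : ℝ) (hnH : 0 ≤ nH)
    (hτ2 : τ * (2 * nH + S) < 2 * π)
    (hsum : Summable fun m : ℤ => ‖h ((m : ℝ) * τ)‖)
    (y : ℝ) (hy : |y| ≤ 2 * nH) :
    hhat y = ∑' m : ℤ, (τ : ℂ) * h ((m : ℝ) * τ)
        * Complex.exp (Complex.I * ((m : ℝ) * τ) * y) := by
  have pi_pos := Real.pi_pos
  have h2π : (0:ℝ) < 2 * π := by linarith
  -- relation between hhat and the Fourier transform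
  have hhat_eq : ∀ v : ℝ, hhat v = 𝓕 h (-(v / (2 * π))) := by
    intro v
    rw [hhat_def, Real.fourier_real_eq_integral_exp_smul]
    refine integral_congr_ae (Filter.Eventually.of_forall fun x => ?_)
    simp only [smul_eq_mul]
    rw [mul_comm]
    congr 1
    have e1 : -2 * π * x * -(v / (2 * π)) = x * v := by field_simp
    rw [e1]; push_cast; ring
  have hFh_eq : ∀ ξ : ℝ, 𝓕 h ξ = hhat (-(2 * π * ξ)) := by
    intro ξ; rw [hhat_eq]; congr 1; field_simp
  have hFh_supp : ∀ ξ : ℝ, S / (2 * π) < |ξ| → 𝓕 h ξ = 0 := by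
    intro ξ hξ
    rw [hFh_eq]; apply hsupp
    rw [abs_neg, abs_mul, abs_of_pos h2π]
    rw [div_lt_iff₀ h2π] at hξ; linarith [hξ]
  have hFh_cont : Continuous (𝓕 h) :=
    VectorFourier.fourierIntegral_continuous Real.continuous_fourierChar
      (by exact continuous_inner) hint
  have hFh_int : Integrable (𝓕 h) := by
    refine hFh_cont.integrable_of_hasCompactSupport ?_
    refine HasCompactSupport.intro (isCompact_Icc (a := -(S / (2*π))) (b := S / (2*π)))
      fun ξ hξ => hFh_supp ξ ?_
    simp only [Set.mem_Icc, not_and_or, not_le] at hξ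
    rcases hξ with hξ | hξ
    · rw [abs_of_neg (by linarith [div_pos hS h2π])]; linarith
    · rw [abs_of_pos (by linarith [div_pos hS h2π])]; linarith
  have hinv : ∀ x : ℝ, 𝓕 (𝓕 h) x = h (-x) := by
    intro x
    have h1 := hint.fourierInv_fourier_eq hFh_int (hcont.continuousAt (x := -x))
    rw [Real.fourierInv_eq_fourier_neg] at h1
    simpa using h1
  set c : ℝ := y / (2 * π) with hc
  have hcabs : |c| ≤ 2 * nH / (2 * π) := by
    rw [hc, abs_div, abs_of_pos h2π]
    gcongr
  set G : C(ℝ, ℂ) := ⟨fun x => 𝓕 h (x / τ - c),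
    hFh_cont.comp ((continuous_id.div_const τ).sub continuous_const)⟩ with hG
  set r0 : ℝ := τ * (S / (2 * π) + |c|) with hr0
  have hGzero : ∀ x : ℝ, r0 < |x| → G x = 0 := by
    intro x hx
    apply hFh_supp
    have h1 : S / (2 * π) + |c| < |x| / τ := by
      rw [lt_div_iff₀ hτ0]; rw [hr0] at hx; nlinarith [hx]
    have h2 : |x| / τ = |x / τ| := by rw [abs_div, abs_of_pos hτ0]
    calc S / (2 * π) < |x| / τ - |c| := by linarith
    _ ≤ |x / τ - c| := by rw [h2]; exact abs_sub_abs_le_abs_sub _ _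
  have hr0nonneg : 0 ≤ r0 := by
    have : 0 ≤ S / (2*π) := le_of_lt (div_pos hS h2π)
    positivity
  -- summability of translates on compacts
  have h_norm : ∀ K : TopologicalSpace.Compacts ℝ,
      Summable fun n : ℤ => ‖(G.comp (ContinuousMap.addRight (n : ℝ))).restrict K‖ := by
    intro K
    obtain ⟨R, hR⟩ := K.isCompact.isBounded.exists_norm_le
    refine summable_of_ne_finset_zero (s := Finset.Icc (-(⌈R + r0⌉ + 1)) (⌈R + r0⌉ + 1))
      fun n hn => ?_
    have hn' : R + r0 < |(n : ℝ)| := by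
      simp only [Finset.mem_Icc, not_and_or, not_le] at hn
      have hceil := Int.le_ceil (R + r0)
      rcases hn with hn | hn
      · have h3 : (n : ℝ) < -((⌈R + r0⌉ : ℝ) + 1) := by exact_mod_cast hn
        have h4 := neg_le_abs (n : ℝ)
        linarith
      · have h3 : ((⌈R + r0⌉ : ℝ) + 1) < (n : ℝ) := by exact_mod_cast hn
        have h4 := le_abs_self (n : ℝ)
        linarith
    have hzero : (G.comp (ContinuousMap.addRight (n : ℝ))).restrict K = 0 := by
      ext ⟨x, hxK⟩
      simp only [ContinuousMap.restrict_apply, ContinuousMap.comp_apply,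
        ContinuousMap.coe_addRight, ContinuousMap.zero_apply]
      apply hGzero
      have hxR : |x| ≤ R := by simpa [Real.norm_eq_abs] using hR x hxK
      have habs : |(n:ℝ)| ≤ |x + n| + |x| := by
        calc |(n:ℝ)| = |(x + n) + (-x)| := by congr 1; ring
        _ ≤ |x + n| + |(-x)| := abs_add_le _ _
        _ = |x + n| + |x| := by rw [abs_neg]
      linarith
    rw [hzero, norm_zero]
  -- Fourier transform of G
  have FG : ∀ w : ℝ, 𝓕 (⇑G) w
      = (τ : ℂ) * Complex.exp (((-(τ * w * y) : ℝ) : ℂ) * Complex.I) * h (-(τ * w)) := by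
    intro w
    rw [Real.fourier_real_eq_integral_exp_smul]
    set F : ℝ → ℂ := fun u =>
      Complex.exp (((-2 * π * τ * (u + c) * w : ℝ) : ℂ) * Complex.I) • 𝓕 h u with hF
    have step1 : ∀ x : ℝ, Complex.exp (((-2 * π * x * w : ℝ) : ℂ) * Complex.I) • G x
        = F ((x - τ * c) / τ) := by
      intro x
      have h0 : (x - τ * c) / τ = x / τ - c := by field_simp
      have h2 : -2 * π * τ * ((x / τ - c) + c) * w = -2 * π * x * w := by field_simp; ring
      simp only [hF, h0, h2]
      rfl
    calc (∫ x : ℝ, Complex.exp (((-2 * π * x * w : ℝ) : ℂ) * Complex.I) • G x)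
        = ∫ x : ℝ, F ((x - τ * c) / τ) := by simp_rw [step1]
      _ = ∫ x : ℝ, F (x / τ) := integral_sub_right_eq_self (fun x => F (x / τ)) (τ * c)
      _ = |τ| • ∫ u : ℝ, F u := MeasureTheory.Measure.integral_comp_div F τ
      _ = (τ : ℂ) * ∫ u : ℝ, F u := by
          rw [abs_of_pos hτ0, Complex.real_smul]
      _ = (τ : ℂ) * Complex.exp (((-(τ * w * y) : ℝ) : ℂ) * Complex.I) * h (-(τ * w)) := by
          rw [mul_assoc]
          congr 1
          have hsplit : ∀ u : ℝ, F u
              = Complex.exp (((-(τ * w * y) : ℝ) : ℂ) * Complex.I)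
                * (Complex.exp (((-2 * π * u * (τ * w) : ℝ) : ℂ) * Complex.I) • 𝓕 h u) := by
            intro u
            have hreal : (-2 * π * τ * (u + c) * w : ℝ)
                = (-(τ * w * y)) + (-2 * π * u * (τ * w)) := by
              rw [hc]; field_simp; ring
            simp only [hF, smul_eq_mul, ← mul_assoc, ← Complex.exp_add]
            congr 2
            rw [hreal]; push_cast; ring
          calc (∫ u : ℝ, F u)
              = ∫ u : ℝ, Complex.exp (((-(τ * w * y) : ℝ) : ℂ) * Complex.I)
                * (Complex.exp (((-2 * π * u * (τ * w) : ℝ) : ℂ) * Complex.I) • 𝓕 h u) := by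
                simp_rw [hsplit]
            _ = Complex.exp (((-(τ * w * y) : ℝ) : ℂ) * Complex.I)
                * ∫ u : ℝ, Complex.exp (((-2 * π * u * (τ * w) : ℝ) : ℂ) * Complex.I) • 𝓕 h u :=
                integral_const_mul _ _
            _ = Complex.exp (((-(τ * w * y) : ℝ) : ℂ) * Complex.I) * h (-(τ * w)) := by
                rw [show (∫ u : ℝ, Complex.exp (((-2 * π * u * (τ * w) : ℝ) : ℂ) * Complex.I)
                    • 𝓕 h u) = 𝓕 (𝓕 h) (τ * w) from by
                  rw [Real.fourier_real_eq_integral_exp_smul]]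
                rw [hinv]
  -- summability of the Fourier transforms
  have h_sum : Summable fun n : ℤ => 𝓕 (⇑G) n := by
    apply Summable.of_norm
    have hnorm : ∀ n : ℤ, ‖𝓕 (⇑G) (n : ℝ)‖ = |τ| * ‖h (((-n : ℤ) : ℝ) * τ)‖ := by
      intro n
      rw [FG, norm_mul, norm_mul, Complex.norm_exp_ofReal_mul_I, Complex.norm_real,
        Real.norm_eq_abs, mul_one]
      congr 2
      push_cast; ring
    simp only [hnorm]
    apply Summable.mul_left
    exact ((Equiv.neg ℤ).summable_iff (f := fun m : ℤ => ‖h ((m : ℝ) * τ)‖)).mpr hsum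
  -- Poisson summation
  have hP := Real.tsum_eq_tsum_fourier h_norm h_sum 0
  -- LHS of Poisson is hhat y
  have hr0lt1 : r0 < 1 := by
    have h1 : S / (2 * π) + |c| ≤ (2 * nH + S) / (2 * π) := by
      rw [add_div]; linarith [hcabs]
    have h2 : τ * ((2 * nH + S) / (2 * π)) < 1 := by
      rw [show τ * ((2 * nH + S) / (2 * π)) = τ * (2 * nH + S) / (2 * π) from by ring,
        div_lt_one h2π]
      exact hτ2
    calc r0 = τ * (S / (2 * π) + |c|) := hr0
    _ ≤ τ * ((2 * nH + S) / (2 * π)) := by gcongr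
    _ < 1 := h2
  have hlhs : (∑' n : ℤ, G ((0 : ℝ) + (n : ℝ))) = hhat y := by
    rw [tsum_eq_single 0 ?_]
    · show 𝓕 h ((0 + (0:ℤ)) / τ - c) = hhat y
      rw [hhat_eq]
      norm_num
      rfl
    · intro n hn
      apply hGzero
      have h1 : (1 : ℝ) ≤ |(n : ℝ)| := by
        rw [← Int.cast_abs]
        exact_mod_cast Int.one_le_abs hn
      simp only [zero_add]
      linarith
  have hrhs : (∑' n : ℤ, 𝓕 (⇑G) n * (fourier n) ((0:ℝ) : UnitAddCircle))
      = ∑' m : ℤ, (τ : ℂ) * h ((m : ℝ) * τ) * Complex.exp (Complex.I * ((m : ℝ) * τ) * y) := by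
    have step : ∀ n : ℤ, 𝓕 (⇑G) n * (fourier n) ((0:ℝ) : UnitAddCircle)
        = (fun m : ℤ => (τ : ℂ) * h ((m : ℝ) * τ)
            * Complex.exp (Complex.I * ((m : ℝ) * τ) * y)) ((Equiv.neg ℤ) n) := by
      intro n
      have hf0 : (fourier n) ((0:ℝ) : UnitAddCircle) = 1 := by
        simp
      rw [hf0, mul_one, FG]
      simp only [Equiv.neg_apply]
      have e1 : (((-(τ * (n:ℝ) * y)) : ℝ) : ℂ) * Complex.I
          = Complex.I * ((((-n : ℤ) : ℝ) : ℂ) * (τ : ℂ)) * (y : ℂ) := by push_cast; ring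
      have e2 : -(τ * (n : ℝ)) = ((-n : ℤ) : ℝ) * τ := by push_cast; ring
      rw [e1, e2]; ring
    calc (∑' n : ℤ, 𝓕 (⇑G) n * (fourier n) ((0:ℝ) : UnitAddCircle))
        = ∑' n : ℤ, (fun m : ℤ => (τ : ℂ) * h ((m : ℝ) * τ)
            * Complex.exp (Complex.I * ((m : ℝ) * τ) * y)) ((Equiv.neg ℤ) n) := by
          exact tsum_congr step
      _ = _ := by
          simpa using (Equiv.neg ℤ).tsum_eq (fun m : ℤ => (τ : ℂ) * h ((m : ℝ) * τ)
            * Complex.exp (Complex.I * ((m : ℝ) * τ) * y))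
  rw [← hlhs, hP, hrhs]
section Main
open Complex

set_option maxHeartbeats 4000000 in
/-- Discretization identity via Poisson summation: if `ĥ` is supported in
`[−S,S]`, all Bohr frequencies of `H` lie in `[−2‖H‖, 2‖H‖]`, and
`0 < τ < 2π/(2‖H‖+S)`, then (entrywise)
`∫ h(t) e^{iHt} A e^{−iHt} dt = Σ_{m∈ℤ} τ h(mτ) e^{iHmτ} A e^{−iHmτ}`. -/
theorem stmt_16 {N : ℕ} (ι : Type) [Fintype ι] [DecidableEq ι]
    (H : Matrix (Fin N) (Fin N) ℂ) (lam : ι → ℝ)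
    (P : ι → Matrix (Fin N) (Fin N) ℂ)
    (hHerm : Hᴴ = H)
    (hPherm : ∀ i, (P i)ᴴ = P i)
    (hPorth : ∀ i j, P i * P j = if i = j then P i else 0)
    (hPsum : ∑ i, P i = 1)
    (hH : H = ∑ i, (lam i : ℂ) • P i)
    (nH : ℝ) (hlam : ∀ i, |lam i| ≤ nH)
    (h : ℝ → ℂ) (hcont : Continuous h) (hint : Integrable h)
    (hhat : ℝ → ℂ)
    (hhat_def : ∀ y : ℝ, hhat y = ∫ x : ℝ, h x * Complex.exp (Complex.I * x * y))
    (S : ℝ) (hS : 0 < S)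
    (hsupp : ∀ y : ℝ, S < |y| → hhat y = 0)
    (τ : ℝ) (hτ0 : 0 < τ) (hτ : τ < 2 * π / (2 * nH + S))
    (hsum : Summable fun m : ℤ => ‖h ((m : ℝ) * τ)‖) :
    ∀ (A : Matrix (Fin N) (Fin N) ℂ) (i j : Fin N),
      (∫ t : ℝ, h t *
        (NormedSpace.exp ((Complex.I * t) • H) * A *
          NormedSpace.exp (-(Complex.I * t) • H)) i j) =
      ∑' m : ℤ, (τ : ℂ) * h ((m : ℝ) * τ) *
        (NormedSpace.exp ((Complex.I * ((m : ℝ) * τ)) • H) * A *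
          NormedSpace.exp (-(Complex.I * ((m : ℝ) * τ)) • H)) i j := by
  intro A i j
  rcases isEmpty_or_nonempty ι with hι | hι
  · exfalso
    have h0 := congrFun (congrFun hPsum i) i
    simp only [Finset.univ_eq_empty, Finset.sum_empty] at h0
    have : (0 : ℂ) = 1 := by
      rw [show ((0 : Matrix (Fin N) (Fin N) ℂ) i i) = 0 from rfl] at h0
      rw [h0, Matrix.one_apply_eq]
    exact zero_ne_one this
  obtain ⟨a0⟩ := hι
  have hnH : 0 ≤ nH := (abs_nonneg _).trans (hlam a0)
  have hpos : 0 < 2 * nH + S := by linarith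
  have hτ2 : τ * (2 * nH + S) < 2 * π := by
    rw [lt_div_iff₀ hpos] at hτ; linarith
  -- spectral form of the exponentials
  have hE : ∀ z : ℂ, NormedSpace.exp (z • H) = ∑ a, Complex.exp (z * (lam a : ℂ)) • P a := by
    intro z; rw [hH]; exact exp_spectral lam P hPorth hPsum z
  -- entrywise formula
  have entry : ∀ z : ℂ,
      (NormedSpace.exp (z • H) * A * NormedSpace.exp ((-z) • H)) i j
        = ∑ a, ∑ b, Complex.exp (z * (lam a : ℂ)) * Complex.exp ((-z) * (lam b : ℂ))
            * ((P a * A * P b) i j) := by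
    intro z
    rw [hE z, hE (-z), Finset.sum_mul, Finset.sum_mul, Matrix.sum_apply]
    refine Finset.sum_congr rfl fun a _ => ?_
    rw [Finset.mul_sum, Matrix.sum_apply]
    refine Finset.sum_congr rfl fun b _ => ?_
    simp only [Matrix.smul_mul, Matrix.mul_smul, Matrix.smul_apply, smul_eq_mul,
      smul_smul]
    ring
  -- combine exponentials
  have hcombine : ∀ (z : ℂ) (a b : ι),
      Complex.exp (z * (lam a : ℂ)) * Complex.exp ((-z) * (lam b : ℂ))
        = Complex.exp (z * ((lam a - lam b : ℝ) : ℂ)) := by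
    intro z a b
    rw [← Complex.exp_add]; congr 1; push_cast; ring
  have habs : ∀ a b : ι, |lam a - lam b| ≤ 2 * nH := by
    intro a b
    calc |lam a - lam b| = |lam a + (-(lam b))| := by rw [sub_eq_add_neg]
    _ ≤ |lam a| + |(-(lam b))| := abs_add_le _ _
    _ ≤ 2 * nH := by rw [abs_neg]; linarith [hlam a, hlam b]
  -- key scalar identity for each Bohr frequency
  have hkey : ∀ a b : ι, hhat (lam a - lam b)
      = ∑' m : ℤ, (τ : ℂ) * h ((m : ℝ) * τ)
          * Complex.exp (Complex.I * ((m : ℝ) * τ) * ((lam a - lam b : ℝ) : ℂ)) := by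
    intro a b
    exact poisson_key h hcont hint hhat hhat_def S hS hsupp τ hτ0 nH hnH hτ2 hsum
      (lam a - lam b) (habs a b)
  -- summability of the discretized series (with constants)
  have hsum2 : ∀ (y : ℝ) (c : ℂ), Summable fun m : ℤ =>
      ((τ : ℂ) * h ((m : ℝ) * τ) * Complex.exp (Complex.I * ((m : ℝ) * τ) * (y : ℂ))) * c := by
    intro y c
    refine Summable.of_norm_bounded (g := fun m : ℤ => |τ| * ‖h ((m : ℝ) * τ)‖ * ‖c‖)
      ((hsum.mul_left |τ|).mul_right ‖c‖) fun m => ?_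
    rw [norm_mul, norm_mul, norm_mul]
    have : ‖Complex.exp (Complex.I * (((m : ℝ) : ℂ) * (τ : ℂ)) * (y : ℂ))‖ = 1 := by
      rw [show (Complex.I * (((m : ℝ) : ℂ) * (τ : ℂ)) * (y : ℂ))
          = Complex.I * (((m : ℝ) * τ : ℝ) : ℂ) * (y : ℂ) from by push_cast; ring]
      exact norm_exp_I_mul _ _
    rw [this, Complex.norm_real, Real.norm_eq_abs, mul_one]
  -- the left-hand side
  have lhs_eq : (∫ t : ℝ, h t *
        (NormedSpace.exp ((Complex.I * t) • H) * A *
          NormedSpace.exp (-(Complex.I * t) • H)) i j)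
      = ∑ a, ∑ b, hhat (lam a - lam b) * ((P a * A * P b) i j) := by
    have hfun : (fun t : ℝ => h t *
          (NormedSpace.exp ((Complex.I * t) • H) * A *
            NormedSpace.exp (-(Complex.I * t) • H)) i j)
        = fun t : ℝ => ∑ a, ∑ b,
            (h t * Complex.exp (Complex.I * (t : ℂ) * ((lam a - lam b : ℝ) : ℂ)))
              * ((P a * A * P b) i j) := by
      funext t
      rw [entry (Complex.I * (t : ℂ)), Finset.mul_sum]
      refine Finset.sum_congr rfl fun a _ => ?_
      rw [Finset.mul_sum]
      refine Finset.sum_congr rfl fun b _ => ?_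
      rw [hcombine (Complex.I * (t : ℂ)) a b]
      ring
    rw [hfun]
    rw [integral_finset_sum _ fun a _ => integrable_finset_sum _ fun b _ =>
      (integrable_rot h hint (lam a - lam b)).mul_const _]
    refine Finset.sum_congr rfl fun a _ => ?_
    rw [integral_finset_sum _ fun b _ => (integrable_rot h hint (lam a - lam b)).mul_const _]
    refine Finset.sum_congr rfl fun b _ => ?_
    rw [integral_mul_const, ← hhat_def]
  -- the right-hand side
  have rhs_eq : (∑' m : ℤ, (τ : ℂ) * h ((m : ℝ) * τ) *
        (NormedSpace.exp ((Complex.I * ((m : ℝ) * τ)) • H) * A *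
          NormedSpace.exp (-(Complex.I * ((m : ℝ) * τ)) • H)) i j)
      = ∑ a, ∑ b, hhat (lam a - lam b) * ((P a * A * P b) i j) := by
    have hfun : ∀ m : ℤ, (τ : ℂ) * h ((m : ℝ) * τ) *
          (NormedSpace.exp ((Complex.I * ((m : ℝ) * τ)) • H) * A *
            NormedSpace.exp (-(Complex.I * ((m : ℝ) * τ)) • H)) i j
        = ∑ a, ∑ b,
            ((τ : ℂ) * h ((m : ℝ) * τ)
              * Complex.exp (Complex.I * (((m : ℝ) : ℂ) * (τ : ℂ)) * ((lam a - lam b : ℝ) : ℂ)))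
              * ((P a * A * P b) i j) := by
      intro m
      rw [entry (Complex.I * (((m : ℝ) : ℂ) * (τ : ℂ))), Finset.mul_sum]
      refine Finset.sum_congr rfl fun a _ => ?_
      rw [Finset.mul_sum]
      refine Finset.sum_congr rfl fun b _ => ?_
      rw [hcombine (Complex.I * (((m : ℝ) : ℂ) * (τ : ℂ))) a b]
      ring
    calc (∑' m : ℤ, (τ : ℂ) * h ((m : ℝ) * τ) *
          (NormedSpace.exp ((Complex.I * ((m : ℝ) * τ)) • H) * A *
            NormedSpace.exp (-(Complex.I * ((m : ℝ) * τ)) • H)) i j)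
        = ∑' m : ℤ, ∑ a, ∑ b,
            ((τ : ℂ) * h ((m : ℝ) * τ)
              * Complex.exp (Complex.I * (((m : ℝ) : ℂ) * (τ : ℂ)) * ((lam a - lam b : ℝ) : ℂ)))
              * ((P a * A * P b) i j) := tsum_congr hfun
      _ = ∑ a, ∑' m : ℤ, ∑ b,
            ((τ : ℂ) * h ((m : ℝ) * τ)
              * Complex.exp (Complex.I * (((m : ℝ) : ℂ) * (τ : ℂ)) * ((lam a - lam b : ℝ) : ℂ)))
              * ((P a * A * P b) i j) :=
          Summable.tsum_finsetSum fun a _ => summable_sum fun b _ => hsum2 (lam a - lam b) _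
      _ = ∑ a, ∑ b, ∑' m : ℤ,
            ((τ : ℂ) * h ((m : ℝ) * τ)
              * Complex.exp (Complex.I * (((m : ℝ) : ℂ) * (τ : ℂ)) * ((lam a - lam b : ℝ) : ℂ)))
              * ((P a * A * P b) i j) :=
          Finset.sum_congr rfl fun a _ => Summable.tsum_finsetSum fun b _ => hsum2 (lam a - lam b) _
      _ = ∑ a, ∑ b, hhat (lam a - lam b) * ((P a * A * P b) i j) := by
          refine Finset.sum_congr rfl fun a _ => Finset.sum_congr rfl fun b _ => ?_
          rw [tsum_mul_right, ← hkey a b]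
  rw [lhs_eq, rhs_eq]

end Main
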